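/- If u : 𝔻 → ℝ is harmonic with u(0) = 0 and |u| < 1 on 𝔻, then ‖∇u(0)‖ ≤ 4/π. -/

import Mathlib

open Metric Complex MeasureTheory intervalIntegral

noncomputable def gradF (u : ℂ → ℝ) : ℂ → ℂ :=
  fun z => ((fderiv ℝ u z 1 : ℝ) : ℂ) - ((fderiv ℝ u z Complex.I : ℝ) : ℂ) * Complex.I

variable {u : ℂ → ℝ}

theorem gradF_differentiableAt
    (hC2 : ContDiffOn ℝ 2 u (ball 0 1))
    (hL : ∀ z ∈ ball (0 : ℂ) 1,
      fderiv ℝ (fun w => fderiv ℝ u w 1) z 1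
        + fderiv ℝ (fun w => fderiv ℝ u w Complex.I) z Complex.I = 0)
    {z : ℂ} (hz : z ∈ ball (0:ℂ) 1) : DifferentiableAt ℂ (gradF u) z := by
  have hC2at : ∀ w ∈ ball (0:ℂ) 1, ContDiffAt ℝ 2 u w := fun w hw =>
    hC2.contDiffAt (isOpen_ball.mem_nhds hw)
  have hD1 : ContDiffAt ℝ 1 (fderiv ℝ u) z := (hC2at z hz).fderiv_right (le_refl 2)
  have hDdiff : DifferentiableAt ℝ (fderiv ℝ u) z := hD1.differentiableAt one_ne_zero
  set S := fderiv ℝ (fderiv ℝ u) z with hS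
  have hx : HasFDerivAt (fderiv ℝ u) S z := hDdiff.hasFDerivAt
  have hev : ∀ᶠ y in nhds z, HasFDerivAt u (fderiv ℝ u y) y := by
    filter_upwards [isOpen_ball.mem_nhds hz] with w hw
    exact ((hC2at w hw).differentiableAt (by norm_num)).hasFDerivAt
  have hsymm : ∀ v w : ℂ, S v w = S w v := fun v w =>
    second_derivative_symmetric_of_eventually hev hx v w
  have hp : HasFDerivAt (fun w => fderiv ℝ u w 1)
      ((ContinuousLinearMap.apply ℝ ℝ (1:ℂ)).comp S) z :=
    (ContinuousLinearMap.apply ℝ ℝ (1:ℂ)).hasFDerivAt.comp z hx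
  have hq : HasFDerivAt (fun w => fderiv ℝ u w Complex.I)
      ((ContinuousLinearMap.apply ℝ ℝ (Complex.I)).comp S) z :=
    (ContinuousLinearMap.apply ℝ ℝ (Complex.I)).hasFDerivAt.comp z hx
  set L : ℂ →L[ℝ] ℂ :=
    (((ContinuousLinearMap.apply ℝ ℝ (1:ℂ)).comp S).smulRight (1:ℂ)) -
      (((ContinuousLinearMap.apply ℝ ℝ (Complex.I)).comp S).smulRight (Complex.I)) with hLdef
  have hfd : HasFDerivAt (gradF u) L z := by
    have h1 := (hp.smul_const (1:ℂ)).sub (hq.smul_const (Complex.I))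
    have he : gradF u = fun w =>
        fderiv ℝ u w 1 • (1:ℂ) - fderiv ℝ u w Complex.I • Complex.I := by
      funext w; simp [gradF, Complex.real_smul]
    rw [he]; exact h1
  -- Laplace equation: S 1 1 + S I I = 0
  have hlap : S 1 1 + S Complex.I Complex.I = 0 := by
    have := hL z hz
    rwa [hp.fderiv, hq.fderiv] at this
  -- value of L at v
  have hLv : ∀ v : ℂ, L v = ((S v 1 : ℝ) : ℂ) - ((S v Complex.I : ℝ) : ℂ) * Complex.I := by
    intro v
    simp [hLdef, Complex.real_smul]
  -- S is real-bilinear; decompose first argument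
  have hSv : ∀ v : ℂ, ∀ w : ℂ, S v w = v.re * S 1 w + v.im * S Complex.I w := by
    intro v w
    have hv : v = v.re • (1:ℂ) + v.im • Complex.I := by
      apply Complex.ext <;> simp
    calc S v w = S (v.re • (1:ℂ) + v.im • Complex.I) w := by rw [← hv]
      _ = v.re * S 1 w + v.im * S Complex.I w := by
          rw [map_add, S.map_smul, S.map_smul]
          simp [smul_eq_mul]
  set c : ℂ := L 1 with hc
  set L' : ℂ →L[ℂ] ℂ := c • ContinuousLinearMap.id ℂ ℂ with hL'
  have hrestrict : L'.restrictScalars ℝ = L := by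
    apply ContinuousLinearMap.ext
    intro v
    have h1 : L v = ((S v 1 : ℝ) : ℂ) - ((S v Complex.I : ℝ) : ℂ) * Complex.I := hLv v
    have h2 : (L'.restrictScalars ℝ) v = c * v := by simp [hL', smul_eq_mul]
    rw [h2, h1, hSv v 1, hSv v Complex.I, hc, hLv 1]
    have e1 : S Complex.I 1 = S 1 Complex.I := hsymm Complex.I 1
    have e2 : S Complex.I Complex.I = - S 1 1 := by linarith [hlap]
    rw [e1, e2]
    apply Complex.ext <;>
      simp [Complex.mul_re, Complex.mul_im, Complex.add_re, Complex.add_im] <;> ring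
  exact (hasFDerivAt_of_restrictScalars ℝ hfd hrestrict).differentiableAt

theorem gradF_continuousOn (hC2 : ContDiffOn ℝ 2 u (ball 0 1)) :
    ContinuousOn (gradF u) (ball 0 1) := by
  have h : ContinuousOn (fderiv ℝ u) (ball 0 1) :=
    hC2.continuousOn_fderiv_of_isOpen isOpen_ball (by norm_num)
  have h1 : ContinuousOn (fun z => ((fderiv ℝ u z 1 : ℝ) : ℂ)) (ball 0 1) :=
    Complex.continuous_ofReal.comp_continuousOn (h.clm_apply continuousOn_const)
  have h2 : ContinuousOn (fun z => ((fderiv ℝ u z Complex.I : ℝ) : ℂ)) (ball 0 1) :=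
    Complex.continuous_ofReal.comp_continuousOn (h.clm_apply continuousOn_const)
  exact h1.sub (h2.mul continuousOn_const)

theorem fderiv_eq_re (hC2 : ContDiffOn ℝ 2 u (ball 0 1)) {z : ℂ} (hz : z ∈ ball (0:ℂ) 1)
    (w : ℂ) : fderiv ℝ u z w = ((gradF u z) * w).re := by
  have hd : DifferentiableAt ℝ u z :=
    (hC2.contDiffAt (isOpen_ball.mem_nhds hz)).differentiableAt (by norm_num)
  have hv : w = w.re • (1:ℂ) + w.im • Complex.I := by apply Complex.ext <;> simp
  have : fderiv ℝ u z w = w.re * fderiv ℝ u z 1 + w.im * fderiv ℝ u z Complex.I := by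
    conv_lhs => rw [hv]
    rw [map_add, (fderiv ℝ u z).map_smul, (fderiv ℝ u z).map_smul]
    simp [smul_eq_mul]
  rw [this]
  simp [gradF, Complex.mul_re]
  ring

theorem u_eq_integral (hC2 : ContDiffOn ℝ 2 u (ball 0 1)) (h0 : u 0 = 0)
    {z : ℂ} (hz1 : z ∈ ball (0:ℂ) 1) :
    u z = ∫ t in (0:ℝ)..1, ((gradF u ((t:ℝ) • z)) * z).re := by
  have hmem : ∀ t : ℝ, t ∈ Set.uIcc (0:ℝ) 1 → (t • z) ∈ ball (0:ℂ) 1 := by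
    intro t ht
    rw [Set.uIcc_of_le (by norm_num : (0:ℝ) ≤ 1)] at ht
    rw [mem_ball_zero_iff] at hz1 ⊢
    rw [norm_smul]
    calc ‖t‖ * ‖z‖ ≤ 1 * ‖z‖ := by
          apply mul_le_mul_of_nonneg_right _ (norm_nonneg z)
          rw [Real.norm_eq_abs, abs_le]; constructor <;> linarith [ht.1, ht.2]
      _ = ‖z‖ := one_mul _
      _ < 1 := hz1
  have hder : ∀ t ∈ Set.uIcc (0:ℝ) 1,
      HasDerivAt (fun s : ℝ => u (s • z)) (((gradF u (t • z)) * z).re) t := by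
    intro t ht
    have hu' : HasFDerivAt u (fderiv ℝ u (t • z)) (t • z) :=
      ((hC2.contDiffAt (isOpen_ball.mem_nhds (hmem t ht))).differentiableAt
        (by norm_num)).hasFDerivAt
    have hsz : HasDerivAt (fun s : ℝ => s • z) z t := by
      have := (hasDerivAt_id t).smul_const z
      simpa using this
    have := hu'.comp_hasDerivAt t hsz
    rwa [fderiv_eq_re hC2 (hmem t ht) z] at this
  have hint : IntervalIntegrable (fun t : ℝ => ((gradF u ((t:ℝ) • z)) * z).re)
      MeasureTheory.volume 0 1 := by
    apply ContinuousOn.intervalIntegrable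
    exact Complex.continuous_re.comp_continuousOn
      (((gradF_continuousOn hC2).comp (Continuous.continuousOn (by continuity)) hmem).mul
        continuousOn_const)
  have := intervalIntegral.integral_eq_sub_of_hasDerivAt hder hint
  rw [this]
  simp [h0]

theorem circle_avg (hC2 : ContDiffOn ℝ 2 u (ball 0 1))
    (hL : ∀ z ∈ ball (0 : ℂ) 1,
      fderiv ℝ (fun w => fderiv ℝ u w 1) z 1
        + fderiv ℝ (fun w => fderiv ℝ u w Complex.I) z Complex.I = 0)
    {s : ℝ} (h0s : 0 ≤ s) (hs : s < 1) :
    ∫ θ in (0:ℝ)..(2*Real.pi), gradF u (circleMap 0 s θ) = (2*Real.pi : ℝ) • gradF u 0 := by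
  rcases eq_or_lt_of_le h0s with h | h
  · simp [← h, circleMap_zero_radius]
  · have hdc : DiffContOnCl ℂ (gradF u) (ball 0 s) := by
      constructor
      · exact fun w hw => (gradF_differentiableAt hC2 hL
          (ball_subset_ball hs.le hw)).differentiableWithinAt
      · refine (gradF_continuousOn hC2).mono ?_
        rw [closure_ball 0 (ne_of_gt h)]
        exact closedBall_subset_ball hs
    have key := hdc.circleIntegral_sub_inv_smul (w := 0) (mem_ball_self h)
    rw [circleIntegral] at key
    have heq : ∀ θ : ℝ, (deriv (circleMap 0 s) θ) • ((circleMap 0 s θ - 0)⁻¹ •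
        gradF u (circleMap 0 s θ)) = Complex.I * gradF u (circleMap 0 s θ) := by
      intro θ
      have hne : circleMap 0 s θ ≠ 0 := circleMap_ne_center (ne_of_gt h)
      rw [deriv_circleMap]
      field_simp [smul_eq_mul]
      simp only [smul_eq_mul, sub_zero, one_div]
      rw [mul_comm (circleMap 0 s θ) I, mul_assoc, ← mul_assoc (circleMap 0 s θ),
        mul_inv_cancel₀ hne, one_mul]
    rw [intervalIntegral.integral_congr (fun θ _ => heq θ)] at key
    rw [intervalIntegral.integral_const_mul] at key
    have : Complex.I * ((2*Real.pi:ℝ) • gradF u 0) = (2 * ↑Real.pi * Complex.I) • gradF u 0 := by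
      simp [smul_eq_mul]; ring
    rw [← this] at key
    exact mul_left_cancel₀ Complex.I_ne_zero key

theorem circle_avg2 (hC2 : ContDiffOn ℝ 2 u (ball 0 1))
    (hL : ∀ z ∈ ball (0 : ℂ) 1,
      fderiv ℝ (fun w => fderiv ℝ u w 1) z 1
        + fderiv ℝ (fun w => fderiv ℝ u w Complex.I) z Complex.I = 0)
    {s : ℝ} (h0s : 0 ≤ s) (hs : s < 1) :
    ∫ θ in (0:ℝ)..(2*Real.pi), Complex.exp (θ*Complex.I)^2 * gradF u (circleMap 0 s θ) = 0 := by
  have hexp : ∫ θ in (0:ℝ)..(2*Real.pi), Complex.exp (θ*Complex.I)^2 = 0 := by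
    have : ∀ θ : ℝ, Complex.exp ((θ:ℂ)*Complex.I)^2 = Complex.exp ((2*Complex.I) * (θ:ℂ)) := by
      intro θ; rw [← Complex.exp_nat_mul]; ring_nf
    rw [intervalIntegral.integral_congr (fun θ _ => this θ)]
    rw [integral_exp_mul_complex (by simp [Complex.I_ne_zero] : (2*Complex.I) ≠ 0)]
    have h1 : (2*Complex.I) * ((2*Real.pi : ℝ):ℂ) = (2*Real.pi)*(2*Complex.I) := by push_cast; ring
    rw [h1]
    have h2 : Complex.exp ((2*Real.pi)*(2*Complex.I)) = 1 := by
      have : ((2*Real.pi)*(2*Complex.I) : ℂ) = (2:ℕ) * (2*Real.pi*Complex.I) := by push_cast; ring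
      rw [this, Complex.exp_nat_mul, Complex.exp_two_pi_mul_I, one_pow]
    simp [h2]
  rcases eq_or_lt_of_le h0s with h | h
  · rw [← h]
    simp only [circleMap_zero_radius, Function.const]
    rw [intervalIntegral.integral_mul_const, hexp, zero_mul]
  · have key := circleIntegral_eq_zero_of_differentiable_on_off_countable h0s
      (Set.countable_empty) (f := fun z => z * gradF u z) (c := 0) ?_ ?_
    · rw [circleIntegral] at key
      have heq : ∀ θ : ℝ, (deriv (circleMap 0 s) θ) • (circleMap 0 s θ *
          gradF u (circleMap 0 s θ)) =
          (Complex.I * (s:ℂ)^2) * (Complex.exp (θ*Complex.I)^2 * gradF u (circleMap 0 s θ)) := by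
        intro θ
        rw [deriv_circleMap, circleMap_zero, smul_eq_mul]
        ring
      rw [intervalIntegral.integral_congr (fun θ _ => heq θ),
        intervalIntegral.integral_const_mul] at key
      rcases mul_eq_zero.1 key with h' | h'
      · exact absurd h' (by simp [Complex.I_ne_zero, ne_of_gt h])
      · exact h'
    · exact (continuousOn_id.mul ((gradF_continuousOn hC2).mono
        (closedBall_subset_ball hs))).mono (le_refl _)
    · intro w hw
      exact differentiableAt_id.mul (gradF_differentiableAt hC2 hL
        (ball_subset_ball hs.le hw.1))

theorem intervalIntegral_conj {f : ℝ → ℂ} {a b : ℝ} :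
    ∫ x in a..b, (starRingEnd ℂ) (f x) = (starRingEnd ℂ) (∫ x in a..b, f x) := by
  rw [intervalIntegral, intervalIntegral, integral_conj, integral_conj, map_sub]

theorem key_identity (hC2 : ContDiffOn ℝ 2 u (ball 0 1))
    (hL : ∀ z ∈ ball (0 : ℂ) 1,
      fderiv ℝ (fun w => fderiv ℝ u w 1) z 1
        + fderiv ℝ (fun w => fderiv ℝ u w Complex.I) z Complex.I = 0)
    (h0 : u 0 = 0) {r : ℝ} (h0r : 0 < r) (hr : r < 1) :
    ∫ θ in (0:ℝ)..(2*Real.pi), ((u (circleMap 0 r θ) : ℝ):ℂ) * Complex.exp (-(θ:ℂ)*Complex.I)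
      = (Real.pi * r : ℝ) • gradF u 0 := by
  set G : ℝ → ℝ → ℂ := fun θ t =>
    ((((gradF u ((t:ℝ) • circleMap 0 r θ)) * circleMap 0 r θ).re : ℝ) : ℂ) *
      Complex.exp (-(θ:ℂ)*Complex.I) with hG
  have hmemc : ∀ θ : ℝ, circleMap 0 r θ ∈ ball (0:ℂ) 1 := by
    intro θ
    rw [mem_ball_zero_iff]
    have : ‖circleMap 0 r θ‖ = |r| := norm_circleMap_zero r θ
    rw [this, abs_of_pos h0r]; exact hr
  have hsmul : ∀ t θ : ℝ, (t:ℝ) • circleMap 0 r θ = circleMap 0 (t*r) θ := by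
    intro t θ
    simp only [circleMap_zero, Complex.real_smul]
    push_cast; ring
  -- step 1: rewrite LHS as double integral
  have step1 : ∫ θ in (0:ℝ)..(2*Real.pi),
      ((u (circleMap 0 r θ) : ℝ):ℂ) * Complex.exp (-(θ:ℂ)*Complex.I)
      = ∫ θ in (0:ℝ)..(2*Real.pi), ∫ t in (0:ℝ)..1, G θ t := by
    apply intervalIntegral.integral_congr
    intro θ _
    simp only [hG]
    rw [u_eq_integral hC2 h0 (hmemc θ), ← intervalIntegral.integral_ofReal,
      ← intervalIntegral.integral_mul_const]
  -- Fubini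
  have swap : ∫ θ in (0:ℝ)..(2*Real.pi), ∫ t in (0:ℝ)..1, G θ t
      = ∫ t in (0:ℝ)..1, ∫ θ in (0:ℝ)..(2*Real.pi), G θ t := by
    have h2pi : (0:ℝ) ≤ 2*Real.pi := by positivity
    have h01 : (0:ℝ) ≤ 1 := by norm_num
    have hGc : ContinuousOn (fun p : ℝ × ℝ => G p.1 p.2)
        ((Set.Icc 0 (2*Real.pi)) ×ˢ (Set.Icc (0:ℝ) 1)) := by
      have c1 : Continuous fun p : ℝ × ℝ => (p.2 : ℝ) • circleMap 0 r p.1 :=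
        continuous_snd.smul ((continuous_circleMap 0 r).comp continuous_fst)
      have hmaps : ∀ p : ℝ × ℝ, p ∈ (Set.Icc 0 (2*Real.pi)) ×ˢ (Set.Icc (0:ℝ) 1) →
          (p.2 : ℝ) • circleMap 0 r p.1 ∈ ball (0:ℂ) 1 := by
        rintro ⟨θ, t⟩ ⟨_, ht⟩
        rw [mem_ball_zero_iff, norm_smul]
        have : ‖circleMap 0 r θ‖ = |r| := norm_circleMap_zero r θ
        rw [this, abs_of_pos h0r, Real.norm_eq_abs, _root_.abs_of_nonneg ht.1]
        nlinarith [ht.2, ht.1]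
      have hg1 : ContinuousOn (fun p : ℝ × ℝ => gradF u ((p.2:ℝ) • circleMap 0 r p.1))
          ((Set.Icc 0 (2*Real.pi)) ×ˢ (Set.Icc (0:ℝ) 1)) :=
        (gradF_continuousOn hC2).comp c1.continuousOn hmaps
      have hg2 : ContinuousOn (fun p : ℝ × ℝ =>
          ((((gradF u ((p.2:ℝ) • circleMap 0 r p.1)) * circleMap 0 r p.1).re : ℝ) : ℂ))
          ((Set.Icc 0 (2*Real.pi)) ×ˢ (Set.Icc (0:ℝ) 1)) :=
        Complex.continuous_ofReal.comp_continuousOn (Complex.continuous_re.comp_continuousOn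
          (hg1.mul ((continuous_circleMap 0 r).comp continuous_fst).continuousOn))
      have hg3 : Continuous fun p : ℝ × ℝ => Complex.exp (-(p.1:ℂ)*Complex.I) := by
        apply Complex.continuous_exp.comp
        continuity
      exact hg2.mul hg3.continuousOn
    have hint : IntegrableOn (fun p : ℝ × ℝ => G p.1 p.2)
        ((Set.Ioc 0 (2*Real.pi)) ×ˢ (Set.Ioc (0:ℝ) 1)) MeasureTheory.volume := by
      apply MeasureTheory.IntegrableOn.mono_set
        (hGc.integrableOn_compact (isCompact_Icc.prod isCompact_Icc))
      exact Set.prod_mono Set.Ioc_subset_Icc_self Set.Ioc_subset_Icc_self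
    rw [intervalIntegral.integral_of_le h2pi, intervalIntegral.integral_of_le h01]
    simp_rw [intervalIntegral.integral_of_le h2pi, intervalIntegral.integral_of_le h01]
    apply MeasureTheory.integral_integral_swap
    rw [Function.uncurry_def, Measure.prod_restrict]
    exact hint
  -- inner integral evaluation
  have inner : ∀ t ∈ Set.uIcc (0:ℝ) 1,
      (∫ θ in (0:ℝ)..(2*Real.pi), G θ t) = (Real.pi * r : ℝ) • gradF u 0 := by
    intro t ht
    rw [Set.uIcc_of_le (by norm_num : (0:ℝ) ≤ 1)] at ht
    have htr0 : 0 ≤ t * r := mul_nonneg ht.1 h0r.le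
    have htr1 : t * r < 1 := by nlinarith [ht.1, ht.2]
    -- pointwise algebraic identity
    have halg : ∀ θ : ℝ, G θ t = ((r:ℂ)/2) * (gradF u (circleMap 0 (t*r) θ)
        + (starRingEnd ℂ) (Complex.exp ((θ:ℂ)*Complex.I)^2 * gradF u (circleMap 0 (t*r) θ))) := by
      intro θ
      simp only [hG, hsmul t θ]
      set g := gradF u (circleMap 0 (t*r) θ) with hg
      rw [circleMap_zero r θ]
      have hconjE : (starRingEnd ℂ) (Complex.exp ((θ:ℂ)*Complex.I))
          = Complex.exp (-(θ:ℂ)*Complex.I) := by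
        rw [← Complex.exp_conj]; congr 1
        simp
      have hre : (((g * ((r:ℂ) * Complex.exp ((θ:ℂ)*Complex.I))).re : ℝ) : ℂ)
          = (g * ((r:ℂ) * Complex.exp ((θ:ℂ)*Complex.I))
            + (starRingEnd ℂ) (g * ((r:ℂ) * Complex.exp ((θ:ℂ)*Complex.I))))/2 := by
        rw [Complex.add_conj]; push_cast; ring
      rw [hre, map_mul, map_mul, Complex.conj_ofReal, hconjE, map_mul, map_pow, hconjE]
      have hEE : Complex.exp ((θ:ℂ)*Complex.I) * Complex.exp (-(θ:ℂ)*Complex.I) = 1 := by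
        rw [← Complex.exp_add]; simp
      linear_combination ((r:ℂ)/2 * g) * hEE
    rw [intervalIntegral.integral_congr (fun θ _ => halg θ)]
    have hcA : Continuous fun θ : ℝ => gradF u (circleMap 0 (t*r) θ) := by
      apply (gradF_continuousOn hC2).comp_continuous (continuous_circleMap 0 (t*r))
      intro θ
      rw [mem_ball_zero_iff]
      have : ‖circleMap 0 (t*r) θ‖ = |t*r| := norm_circleMap_zero (t*r) θ
      rw [this, _root_.abs_of_nonneg htr0]; exact htr1
    have hcB : Continuous fun θ : ℝ =>
        (starRingEnd ℂ) (Complex.exp ((θ:ℂ)*Complex.I)^2 * gradF u (circleMap 0 (t*r) θ)) := by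
      apply Complex.continuous_conj.comp
      have : Continuous fun θ : ℝ => ((θ:ℂ)*Complex.I) :=
        Complex.continuous_ofReal.mul continuous_const
      exact ((Complex.continuous_exp.comp this).pow 2).mul hcA
    rw [intervalIntegral.integral_const_mul, intervalIntegral.integral_add
      (hcA.intervalIntegrable _ _) (hcB.intervalIntegrable _ _)]
    have e1 : ∫ θ in (0:ℝ)..(2*Real.pi), gradF u (circleMap 0 (t*r) θ)
        = (2*Real.pi : ℝ) • gradF u 0 := circle_avg hC2 hL htr0 htr1
    have e2 : ∫ θ in (0:ℝ)..(2*Real.pi),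
        (starRingEnd ℂ) (Complex.exp ((θ:ℂ)*Complex.I)^2 * gradF u (circleMap 0 (t*r) θ)) = 0 := by
      rw [_root_.intervalIntegral_conj, circle_avg2 hC2 hL htr0 htr1, map_zero]
    rw [e1, e2, add_zero, Complex.real_smul, Complex.real_smul]
    push_cast
    ring
  rw [step1, swap, intervalIntegral.integral_congr inner]
  simp

theorem intervalIntegral_re {f : ℝ → ℂ} {a b : ℝ}
    (hf : IntervalIntegrable f MeasureTheory.volume a b) :
    (∫ x in a..b, f x).re = ∫ x in a..b, (f x).re := by
  have h1 := Complex.reCLM.integral_comp_comm hf.1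
  have h2 := Complex.reCLM.integral_comp_comm hf.2
  simp only [Complex.reCLM_apply] at h1 h2
  rw [intervalIntegral, intervalIntegral, Complex.sub_re, h1, h2]

theorem abs_cos_integral : ∫ θ in (-(Real.pi/2))..(-(Real.pi/2)+2*Real.pi), |Real.cos θ| = 4 := by
  have hi1 : IntervalIntegrable (fun θ : ℝ => |Real.cos θ|) MeasureTheory.volume
      (-(Real.pi/2)) (Real.pi/2) := (Real.continuous_cos.abs).intervalIntegrable _ _
  have hi2 : IntervalIntegrable (fun θ : ℝ => |Real.cos θ|) MeasureTheory.volume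
      (Real.pi/2) (-(Real.pi/2)+2*Real.pi) := (Real.continuous_cos.abs).intervalIntegrable _ _
  rw [← intervalIntegral.integral_add_adjacent_intervals hi1 hi2]
  have p1 : ∫ θ in (-(Real.pi/2))..(Real.pi/2), |Real.cos θ| = 2 := by
    rw [intervalIntegral.integral_congr (g := fun θ => Real.cos θ) ?_]
    · rw [integral_cos]; norm_num
    · intro θ hθ
      rw [Set.uIcc_of_le (by linarith [Real.pi_pos] : -(Real.pi/2) ≤ Real.pi/2)] at hθ
      exact _root_.abs_of_nonneg (Real.cos_nonneg_of_mem_Icc hθ)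
  have p2 : ∫ θ in (Real.pi/2)..(-(Real.pi/2)+2*Real.pi), |Real.cos θ| = 2 := by
    rw [intervalIntegral.integral_congr (g := fun θ => -Real.cos θ) ?_]
    · rw [intervalIntegral.integral_neg, integral_cos]
      have h1 : Real.sin (-(Real.pi/2)+2*Real.pi) = -1 := by
        have he : (-(Real.pi/2)+2*Real.pi : ℝ) = Real.pi + Real.pi/2 := by ring
        rw [he, Real.sin_add]
        simp
      rw [h1]; norm_num
    · intro θ hθ
      rw [Set.uIcc_of_le (by linarith [Real.pi_pos] : Real.pi/2 ≤ -(Real.pi/2)+2*Real.pi)] at hθ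
      have hc : Real.cos θ ≤ 0 := by
        have h1 : Real.cos (θ - Real.pi) = -Real.cos θ := by
          rw [Real.cos_sub]; simp
        have h2 : 0 ≤ Real.cos (θ - Real.pi) := by
          apply Real.cos_nonneg_of_mem_Icc
          constructor <;> [linarith [hθ.1]; linarith [hθ.2]]
        linarith [h1 ▸ h2]
      simp [abs_of_nonpos hc]
  rw [p1, p2]; norm_num

theorem bound_r (hC2 : ContDiffOn ℝ 2 u (ball 0 1))
    (hL : ∀ z ∈ ball (0 : ℂ) 1,
      fderiv ℝ (fun w => fderiv ℝ u w 1) z 1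
        + fderiv ℝ (fun w => fderiv ℝ u w Complex.I) z Complex.I = 0)
    (h0 : u 0 = 0) (hbd : ∀ z ∈ ball (0 : ℂ) 1, |u z| < 1)
    {r : ℝ} (h0r : 0 < r) (hr : r < 1) :
    Real.pi * r * ‖gradF u 0‖ ≤ 4 := by
  by_cases hz : gradF u 0 = 0
  · simp [hz]
  set A : ℂ := (Real.pi * r : ℝ) • gradF u 0 with hA
  have hAabs : ‖A‖ = Real.pi * r * ‖gradF u 0‖ := by
    rw [hA]
    rw [Complex.real_smul, norm_mul, Complex.norm_real, Real.norm_eq_abs,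
      _root_.abs_of_pos (by positivity : (0:ℝ) < Real.pi * r)]
  have hAne : A ≠ 0 := by
    rw [hA]
    intro h
    rcases smul_eq_zero.1 h with hc | hc
    · exact absurd hc (by positivity)
    · exact hz hc
  set b : ℂ := ((‖A‖ : ℝ) : ℂ) / A with hb
  have habsb : ‖b‖ = 1 := by
    rw [hb, norm_div, Complex.norm_real, norm_norm, div_self]
    simpa using hAne
  have hbA : b * A = ((‖A‖ : ℝ) : ℂ) := by
    rw [hb, div_mul_cancel₀]
    exact hAne
  -- integrability of the integrand
  have hmemc : ∀ θ : ℝ, circleMap 0 r θ ∈ ball (0:ℂ) 1 := by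
    intro θ
    rw [mem_ball_zero_iff]
    have : ‖circleMap 0 r θ‖ = |r| := norm_circleMap_zero r θ
    rw [this, abs_of_pos h0r]; exact hr
  have hucont : Continuous fun θ : ℝ => u (circleMap 0 r θ) := by
    apply (hC2.continuousOn.mono (le_refl _)).comp_continuous (continuous_circleMap 0 r) hmemc
  have hcont : Continuous fun θ : ℝ =>
      b * (((u (circleMap 0 r θ) : ℝ):ℂ) * Complex.exp (-(θ:ℂ)*Complex.I)) := by
    apply continuous_const.mul
    apply (Complex.continuous_ofReal.comp hucont).mul
    apply Complex.continuous_exp.comp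
    exact (Complex.continuous_ofReal.neg).mul continuous_const
  -- |A| as an integral
  have hre : (‖A‖ : ℝ) = ∫ θ in (0:ℝ)..(2*Real.pi),
      (b * (((u (circleMap 0 r θ) : ℝ):ℂ) * Complex.exp (-(θ:ℂ)*Complex.I))).re := by
    have h1 : ((‖A‖ : ℝ) : ℂ) = b * A := hbA.symm
    have h2 : A = ∫ θ in (0:ℝ)..(2*Real.pi),
        ((u (circleMap 0 r θ) : ℝ):ℂ) * Complex.exp (-(θ:ℂ)*Complex.I) :=
      (key_identity hC2 hL h0 h0r hr).symm
    have h3 : b * A = ∫ θ in (0:ℝ)..(2*Real.pi),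
        b * (((u (circleMap 0 r θ) : ℝ):ℂ) * Complex.exp (-(θ:ℂ)*Complex.I)) := by
      rw [h2, ← intervalIntegral.integral_const_mul]
    have := congrArg Complex.re (h1.trans h3)
    rw [Complex.ofReal_re] at this
    rw [this, _root_.intervalIntegral_re (hcont.intervalIntegrable _ _)]
  -- pointwise bound
  have hptwise : ∀ θ ∈ Set.uIcc (0:ℝ) (2*Real.pi),
      (b * (((u (circleMap 0 r θ) : ℝ):ℂ) * Complex.exp (-(θ:ℂ)*Complex.I))).re
        ≤ |Real.cos (Complex.arg b - θ)| := by
    intro θ _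
    have hbeq : b = Complex.exp ((Complex.arg b : ℝ) * Complex.I) := by
      conv_lhs => rw [← Complex.norm_mul_exp_arg_mul_I b]
      rw [habsb]; simp
    have hexp : b * Complex.exp (-(θ:ℂ)*Complex.I)
        = Complex.exp (((Complex.arg b - θ : ℝ):ℂ) * Complex.I) := by
      conv_lhs => rw [hbeq]
      rw [← Complex.exp_add]
      congr 1
      push_cast; ring
    have heq : (b * (((u (circleMap 0 r θ) : ℝ):ℂ) * Complex.exp (-(θ:ℂ)*Complex.I))).re
        = u (circleMap 0 r θ) * Real.cos (Complex.arg b - θ) := by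
      have : b * (((u (circleMap 0 r θ) : ℝ):ℂ) * Complex.exp (-(θ:ℂ)*Complex.I))
          = ((u (circleMap 0 r θ) : ℝ):ℂ) * Complex.exp (((Complex.arg b - θ : ℝ):ℂ) * Complex.I) := by
        rw [← hexp]; ring
      rw [this, Complex.re_ofReal_mul, Complex.exp_ofReal_mul_I_re]
    rw [heq]
    calc u (circleMap 0 r θ) * Real.cos (Complex.arg b - θ)
        ≤ |u (circleMap 0 r θ) * Real.cos (Complex.arg b - θ)| := le_abs_self _
      _ = |u (circleMap 0 r θ)| * |Real.cos (Complex.arg b - θ)| := abs_mul _ _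
      _ ≤ 1 * |Real.cos (Complex.arg b - θ)| := by
          apply mul_le_mul_of_nonneg_right (le_of_lt (hbd _ (hmemc θ))) (abs_nonneg _)
      _ = |Real.cos (Complex.arg b - θ)| := one_mul _
  -- the cos integral
  have hcosint : ∫ θ in (0:ℝ)..(2*Real.pi), |Real.cos (Complex.arg b - θ)| = 4 := by
    rw [intervalIntegral.integral_comp_sub_left (fun x => |Real.cos x|) (Complex.arg b), sub_zero]
    have hper : Function.Periodic (fun x : ℝ => |Real.cos x|) (2*Real.pi) := by
      intro x; simp [Real.cos_periodic x]
    have h1 : Complex.arg b - 2*Real.pi + 2*Real.pi = Complex.arg b := by ring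
    have := hper.intervalIntegral_add_eq (Complex.arg b - 2*Real.pi) (-(Real.pi/2))
    rw [h1] at this
    rw [this]
    exact abs_cos_integral
  rw [← hAabs, hre]
  calc (∫ θ in (0:ℝ)..(2*Real.pi),
      (b * (((u (circleMap 0 r θ) : ℝ):ℂ) * Complex.exp (-(θ:ℂ)*Complex.I))).re)
      ≤ ∫ θ in (0:ℝ)..(2*Real.pi), |Real.cos (Complex.arg b - θ)| := by
        apply intervalIntegral.integral_mono_on (by positivity)
        · exact (Complex.continuous_re.comp hcont).intervalIntegrable _ _
        · exact ((Real.continuous_cos.comp (continuous_const.sub continuous_id)).abs).intervalIntegrable _ _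
        · intro θ hθ
          exact hptwise θ (by rwa [Set.uIcc_of_le (by positivity)] )
    _ = 4 := hcosint

/-- `u` is harmonic on the unit disc: it is `C²` there and its Laplacian
`u_{xx} + u_{yy}` vanishes at every point of the disc. -/
def HarmonicOnDisc {E : Type*} [NormedAddCommGroup E] [NormedSpace ℝ E] (u : ℂ → E) : Prop :=
  ContDiffOn ℝ 2 u (ball 0 1) ∧
  ∀ z ∈ ball (0 : ℂ) 1,
    fderiv ℝ (fun w => fderiv ℝ u w 1) z 1
      + fderiv ℝ (fun w => fderiv ℝ u w Complex.I) z Complex.I = 0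

/-- If `u : 𝔻 → ℝ` is harmonic with `u(0) = 0` and `|u| < 1` on `𝔻`,
then `‖∇u(0)‖ ≤ 4/π`. -/
theorem stmt16 (u : ℂ → ℝ) (hu : HarmonicOnDisc u) (h0 : u 0 = 0)
    (hbd : ∀ z ∈ ball (0 : ℂ) 1, |u z| < 1) :
    Real.sqrt ((fderiv ℝ u 0 1) ^ 2 + (fderiv ℝ u 0 Complex.I) ^ 2) ≤ 4 / Real.pi := by
  obtain ⟨hC2, hLp⟩ := hu
  have habs : Real.sqrt ((fderiv ℝ u 0 1) ^ 2 + (fderiv ℝ u 0 Complex.I) ^ 2)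
      = ‖gradF u 0‖ := by
    rw [Complex.norm_def, Complex.normSq_apply]
    congr 1
    simp [gradF]
    ring
  rw [habs]
  have hball : ∀ r ∈ Set.Ioo (0:ℝ) 1, Real.pi * r * ‖gradF u 0‖ ≤ 4 :=
    fun r hr => bound_r hC2 hLp h0 hbd hr.1 hr.2
  have hlim : Real.pi * 1 * ‖gradF u 0‖ ≤ 4 := by
    have hc : Filter.Tendsto (fun r : ℝ => Real.pi * r * ‖gradF u 0‖)
        (nhdsWithin 1 (Set.Iio 1)) (nhds (Real.pi * 1 * ‖gradF u 0‖)) := by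
      apply Filter.Tendsto.mono_left _ nhdsWithin_le_nhds
      exact Continuous.tendsto (by continuity) 1
    apply le_of_tendsto hc
    filter_upwards [Ioo_mem_nhdsLT_of_mem
      (show (1:ℝ) ∈ Set.Ioc (0:ℝ) 1 by constructor <;> norm_num)] with r hr
    exact hball r hr
  rw [le_div_iff₀ Real.pi_pos]
  nlinarith [hlim]
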